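/- The set of local permutations of X = {0,1}^ℤ forms a group under composition, and this group is locally finite. -/
import Mathlib


noncomputable section

/-- The full binary shift space `{0,1}^ℤ`. -/
abbrev X : Type := ℤ → ZMod 2

instance : Group (X ≃ₜ X) where
  mul f g := g.trans f
  one := Homeomorph.refl X
  inv := Homeomorph.symm
  mul_assoc f g h := rfl
  one_mul f := Homeomorph.ext fun _ => rfl
  mul_one f := Homeomorph.ext fun _ => rfl
  inv_mul_cancel f := Homeomorph.ext fun x => f.symm_apply_apply x

/-- The shift `σ^n`, `σ^n(x)_i = x_{i+n}`. -/
def shiftPow (n : ℤ) : X ≃ₜ X where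
  toFun x i := x (i + n)
  invFun x i := x (i - n)
  left_inv x := funext fun i => congrArg x (by ring)
  right_inv x := funext fun i => congrArg x (by ring)
  continuous_toFun := continuous_pi fun i => continuous_apply (i + n)
  continuous_invFun := continuous_pi fun i => continuous_apply (i - n)

/-- The shift `σ`. -/
def shiftHomeo : X ≃ₜ X := shiftPow 1

/-- A local permutation: a self-homeomorphism fixing all coordinates outside a bounded interval. -/
def IsLocalPerm (f : X ≃ₜ X) : Prop :=
  ∃ r : ℤ, ∀ (x : X) (i : ℤ), r ≤ |i| → f x i = x i

/-- The group `G` generated by the shift and the local permutations. -/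
def Ggrp : Subgroup (X ≃ₜ X) :=
  Subgroup.closure ({shiftHomeo} ∪ {f | IsLocalPerm f})

/-- Build a homeomorphism of `X` from an involutive continuous map. -/
def mkInvHomeo (F : X → X) (h : Function.Involutive F) (hc : Continuous F) : X ≃ₜ X :=
  ⟨Function.Involutive.toPerm F h, hc, hc⟩

open Classical in
/-- Every continuous map `X → ZMod 2` depends on finitely many coordinates. -/
lemma exists_dep (g : X → ZMod 2) (hg : Continuous g) :
    ∃ D : Finset ℤ, ∀ x y : X, (∀ i ∈ D, x i = y i) → g x = g y := by
  have key : ∀ x : X, ∃ I : Finset ℤ, ∀ y : X, (∀ i ∈ I, y i = x i) → g y = g x := by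
    intro x
    have hopen : IsOpen (g ⁻¹' {g x}) := hg.isOpen_preimage _ (isOpen_discrete _)
    obtain ⟨I, u, hu, hsub⟩ := isOpen_pi_iff.mp hopen x rfl
    exact ⟨I, fun y hy => hsub fun i hi => (hy i hi) ▸ (hu i hi).2⟩
  choose I hI using key
  set U : X → Set X := fun x => {y | ∀ i ∈ I x, y i = x i} with hU
  have hUopen : ∀ x, IsOpen (U x) := by
    intro x
    have : U x = ⋂ i ∈ I x, (fun y : X => y i) ⁻¹' {x i} := by
      ext y; simp [hU, Set.mem_iInter]
    rw [this]
    exact isOpen_biInter_finset fun i _ =>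
      (continuous_apply i).isOpen_preimage _ (isOpen_discrete _)
  obtain ⟨T, hT⟩ := isCompact_univ.elim_finite_subcover U hUopen
    (fun x _ => Set.mem_iUnion.2 ⟨x, fun i _ => rfl⟩)
  refine ⟨T.biUnion I, fun x y hxy => ?_⟩
  obtain ⟨z, hz, hxz⟩ := Set.mem_iUnion₂.1 (hT (Set.mem_univ x))
  have hx : g x = g z := hI z x hxz
  have hy : g y = g z := hI z y fun i hi =>
    (hxy i (Finset.mem_biUnion.2 ⟨z, hz, hi⟩)).symm.trans (hxz i hi)
  rw [hx, hy]

/-- A block permutation with window `D`: fixes coordinates off `D` and depends only on `D`. -/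
def BlockPerm (f : X ≃ₜ X) (D : Finset ℤ) : Prop :=
  (∀ (x : X) (i : ℤ), i ∉ D → f x i = x i) ∧
  (∀ x y : X, (∀ i ∈ D, x i = y i) → ∀ i ∈ D, f x i = f y i)

/-- The truncation to `D` (zero off `D`). -/
def trunc (D : Finset ℤ) (x : X) : X := fun i => if i ∈ D then x i else 0

lemma trunc_comm {f : X ≃ₜ X} {D : Finset ℤ} (h : BlockPerm f D) (x : X) :
    f (trunc D x) = trunc D (f x) := by
  funext i
  by_cases hi : i ∈ D
  · have := h.2 (trunc D x) x (fun j hj => by simp [trunc, hj]) i hi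
    simp [trunc, hi, this]
  · simp [trunc, hi, h.1 (trunc D x) i hi]

lemma blockperm_inj {f : X ≃ₜ X} {D : Finset ℤ} (h : BlockPerm f D) :
    ∀ x y : X, (∀ i ∈ D, f x i = f y i) → ∀ i ∈ D, x i = y i := by
  intro x y hxy i hi
  have he : trunc D (f x) = trunc D (f y) := by
    funext j; by_cases hj : j ∈ D <;> simp [trunc, hj, hxy j]
  have : f (trunc D x) = f (trunc D y) := by
    rw [trunc_comm h, trunc_comm h, he]
  have h2 : trunc D x = trunc D y := f.toEquiv.injective this
  have := congrFun h2 i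
  simpa [trunc, hi] using this

lemma blockperm_one (D : Finset ℤ) : BlockPerm 1 D :=
  ⟨fun _ _ _ => rfl, fun x y hxy i hi => hxy i hi⟩

lemma blockperm_mul {f g : X ≃ₜ X} {D : Finset ℤ} (hf : BlockPerm f D)
    (hg : BlockPerm g D) : BlockPerm (f * g) D := by
  constructor
  · intro x i hi
    show f (g x) i = x i
    rw [hf.1 (g x) i hi, hg.1 x i hi]
  · intro x y hxy i hi
    exact hf.2 (g x) (g y) (fun j hj => hg.2 x y hxy j hj) i hi

lemma blockperm_inv {f : X ≃ₜ X} {D : Finset ℤ} (hf : BlockPerm f D) :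
    BlockPerm f⁻¹ D := by
  constructor
  · intro x i hi
    have := hf.1 (f.symm x) i hi
    rw [f.apply_symm_apply] at this
    exact this.symm
  · intro x y hxy i hi
    refine blockperm_inj hf (f.symm x) (f.symm y) (fun j hj => ?_) i hi
    rw [f.apply_symm_apply, f.apply_symm_apply]
    exact hxy j hj

lemma blockperm_mono {f : X ≃ₜ X} {D D' : Finset ℤ} (hDD : D ⊆ D')
    (hf : BlockPerm f D) : BlockPerm f D' := by
  constructor
  · exact fun x i hi => hf.1 x i fun h => hi (hDD h)
  · intro x y hxy i hi
    by_cases hiD : i ∈ D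
    · exact hf.2 x y (fun j hj => hxy j (hDD hj)) i hiD
    · rw [hf.1 x i hiD, hf.1 y i hiD]; exact hxy i hi

/-- The subgroup of block permutations with window `D`. -/
def blockSubgroup (D : Finset ℤ) : Subgroup (X ≃ₜ X) where
  carrier := {f | BlockPerm f D}
  one_mem' := blockperm_one D
  mul_mem' := blockperm_mul
  inv_mem' := blockperm_inv

lemma blockperm_finite (D : Finset ℤ) : {f : X ≃ₜ X | BlockPerm f D}.Finite := by
  classical
  set Φ : (X ≃ₜ X) → ((D → ZMod 2) → (D → ZMod 2)) :=
    fun f s i => f (fun j => if h : j ∈ D then s ⟨j, h⟩ else 0) i with hΦ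
  have hinj : Set.InjOn Φ {f : X ≃ₜ X | BlockPerm f D} := by
    intro f hf g hg hfg
    refine Homeomorph.ext fun x => funext fun i => ?_
    by_cases hi : i ∈ D
    · have hx : ∀ j ∈ D, x j = (fun j => if h : j ∈ D then x j else 0) j := by
        intro j hj; simp [hj]
      have h1 : f x i = Φ f (fun j : D => x j) ⟨i, hi⟩ := by
        simpa [hΦ] using hf.2 x _ hx i hi
      have h2 : g x i = Φ g (fun j : D => x j) ⟨i, hi⟩ := by
        simpa [hΦ] using hg.2 x _ hx i hi
      rw [h1, h2, hfg]
    · rw [hf.1 x i hi, hg.1 x i hi]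
  exact Set.Finite.of_finite_image (Set.toFinite _) hinj

lemma isLocalPerm_block {f : X ≃ₜ X} (hf : IsLocalPerm f) :
    ∃ D : Finset ℤ, BlockPerm f D := by
  classical
  obtain ⟨r, hr⟩ := hf
  have hcont : ∀ i : ℤ, Continuous fun x : X => f x i := fun i =>
    (continuous_apply i).comp f.continuous
  choose Dep hDep using fun i : ℤ => exists_dep (fun x => f x i) (hcont i)
  refine ⟨Finset.Ioo (-r) r ∪ (Finset.Ioo (-r) r).biUnion Dep, ?_, ?_⟩
  · intro x i hi
    have : i ∉ Finset.Ioo (-r) r := fun h => hi (Finset.mem_union_left _ h)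
    rw [Finset.mem_Ioo] at this
    exact hr x i (by rw [le_abs]; omega)
  · intro x y hxy i hi
    by_cases hio : i ∈ Finset.Ioo (-r) r
    · exact hDep i x y fun j hj =>
        hxy j (Finset.mem_union_right _ (Finset.mem_biUnion.2 ⟨i, hio, hj⟩))
    · rw [Finset.mem_Ioo] at hio
      rw [hr x i (by rw [le_abs]; omega), hr y i (by rw [le_abs]; omega)]
      exact hxy i hi

/-- The local permutations form a subgroup of the homeomorphism group of `X`,
and this group is locally finite: every finitely generated subgroup of it is finite. -/
theorem stmt4 :
    ∃ H : Subgroup (X ≃ₜ X),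
      (H : Set (X ≃ₜ X)) = {f | IsLocalPerm f} ∧
      ∀ S : Finset (X ≃ₜ X), (S : Set (X ≃ₜ X)) ⊆ (H : Set (X ≃ₜ X)) →
        ((Subgroup.closure (S : Set (X ≃ₜ X)) : Subgroup (X ≃ₜ X)) : Set (X ≃ₜ X)).Finite := by
  classical
  refine ⟨{ carrier := {f | IsLocalPerm f}
            one_mem' := ⟨0, fun _ _ _ => rfl⟩
            mul_mem' := ?_
            inv_mem' := ?_ }, rfl, ?_⟩
  · rintro f g ⟨r, hr⟩ ⟨s, hs⟩
    refine ⟨max r s, fun x i hi => ?_⟩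
    show f (g x) i = x i
    rw [hr (g x) i (le_trans (le_max_left r s) hi),
      hs x i (le_trans (le_max_right r s) hi)]
  · rintro f ⟨r, hr⟩
    refine ⟨r, fun x i hi => ?_⟩
    have := hr (f.symm x) i hi
    rw [f.apply_symm_apply] at this
    exact this.symm
  · intro S hS
    set d : (X ≃ₜ X) → Finset ℤ := fun f =>
      if h : IsLocalPerm f then (isLocalPerm_block h).choose else ∅ with hd
    set D : Finset ℤ := S.biUnion d with hDdef
    have hblock : ∀ f ∈ S, BlockPerm f D := by
      intro f hf
      have hlf : IsLocalPerm f := hS hf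
      have : BlockPerm f (d f) := by
        rw [hd]; simp only [hlf, dif_pos]
        exact (isLocalPerm_block hlf).choose_spec
      exact blockperm_mono (Finset.subset_biUnion_of_mem d hf) this
    have hle : Subgroup.closure (S : Set (X ≃ₜ X)) ≤ blockSubgroup D :=
      (Subgroup.closure_le _).2 fun f hf => hblock f hf
    exact (blockperm_finite D).subset fun f hf => hle hf
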